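/- There exist C > 0 and N ∈ ℕ such that for all n ≥ N, |∫_{n^{−1/6}}^{n^{1/6}} cos(x/√n) / (n sin²(x/(4√n)) + cos²(x/√n)) dx − 2π| ≤ C n^{−1/6}. -/

import Mathlib

open Real Filter intervalIntegral

set_option maxHeartbeats 1000000

namespace IntegralTwoPiAux

lemma arctan_le_self' {x : ℝ} (hx : 0 ≤ x) : arctan x ≤ x := by
  rcases eq_or_lt_of_le hx with h | h
  · simp [← h]
  · have h1 : 0 < arctan x := by rw [← Real.arctan_zero]; exact Real.arctan_strictMono h
    have h2 := Real.lt_tan h1 (Real.arctan_lt_pi_div_two x)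
    rw [Real.tan_arctan] at h2
    exact h2.le

lemma poly_bd (x : ℝ) : x^2*(x^2+16)/32 + x^4/512 + x^2 ≤ 2*(x^2+16)^2 := by
  nlinarith [sq_nonneg x, sq_nonneg (x^2)]

lemma ptwise {m r x : ℝ} (hr : r = Real.sqrt m) (hm : 4096 ≤ m)
    (hx0 : 0 < x) (hxu : x / r ≤ 1 / 16) :
    |Real.cos (x / r) / (m * Real.sin (x / (4 * r)) ^ 2 + Real.cos (x / r) ^ 2)
      - 1 / (1 + (x / 4) ^ 2)| ≤ 2048 / m := by
  have hm0 : (0:ℝ) < m := by linarith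
  have hr0 : 0 < r := hr ▸ Real.sqrt_pos.2 hm0
  have hr2 : r ^ 2 = m := by rw [hr, sq, Real.mul_self_sqrt hm0.le]
  set u := x / r with hu
  have hu0 : 0 < u := div_pos hx0 hr0
  have hxr : x = u * r := by rw [hu, div_mul_cancel₀ x hr0.ne']
  have ht : x / (4 * r) = u / 4 := by rw [hxr]; field_simp
  rw [ht]
  set t := u / 4 with htdef
  have ht0 : 0 < t := by positivity
  have ht1 : t ≤ 1 / 64 := by rw [htdef]; linarith
  have hu1 : u ≤ 1 / 16 := hxu
  -- basic trig bounds
  have hc1 : 1 - u ^ 2 / 2 ≤ Real.cos u := Real.one_sub_sq_div_two_le_cos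
  have hcle : Real.cos u ≤ 1 := Real.cos_le_one u
  have hchalf : (1:ℝ)/2 ≤ Real.cos u := by nlinarith
  have hsin : t - t ^ 3 / 4 < Real.sin t := by have := Real.sin_gt_sub_cube ht0; linarith [pow_pos ht0 3]
  have hsle : Real.sin t ≤ t := Real.sin_le ht0.le
  have ht3 : t ^ 3 ≤ t := by nlinarith [mul_pos ht0 ht0]
  have hshalf : t / 2 ≤ Real.sin t := by nlinarith
  have hs0 : 0 < Real.sin t := by linarith
  -- u^2 = x^2 / m
  have hu2 : u ^ 2 * m = x ^ 2 := by rw [hxr]; rw [← hr2]; ring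
  have hmss : x ^ 2 / 64 ≤ m * Real.sin t ^ 2 := by
    have : m * (t/2) ^ 2 ≤ m * Real.sin t ^ 2 := by
      apply mul_le_mul_of_nonneg_left _ hm0.le
      nlinarith
    have h2 : m * (t/2)^2 = x^2/64 := by
      rw [htdef]
      have : m * (u/4/2)^2 = u^2 * m / 64 := by ring
      rw [this, hu2]
    linarith [h2 ▸ this]
  set c := Real.cos u with hcdef
  set s := Real.sin t with hsdef
  set D1 := m * s ^ 2 + c ^ 2 with hD1
  set D2 := 1 + (x/4)^2 with hD2
  have hD1pos : (x^2 + 16) / 64 ≤ D1 := by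
    have : (1:ℝ)/4 ≤ c^2 := by nlinarith
    rw [hD1]; linarith [hmss, this]
  have hD2eq : D2 = (x^2 + 16)/16 := by rw [hD2]; ring
  have hx16 : (0:ℝ) < x^2 + 16 := by positivity
  have hD1p : 0 < D1 := lt_of_lt_of_le (by positivity) hD1pos
  have hD2p : 0 < D2 := by rw [hD2eq]; positivity
  -- numerator bound
  have hnum : |c * D2 - D1| ≤ 2 * (x^2+16)^2 / m := by
    have e1 : |c - 1| ≤ x^2 / (2*m) := by
      rw [abs_sub_comm, abs_of_nonneg (by linarith)]
      have : u^2/2 = x^2/(2*m) := by rw [eq_div_iff (by positivity)]; linear_combination hu2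
      linarith [hc1, this ▸ le_refl (u^2/2)]
    have e2 : |1 - c^2| ≤ x^2 / m := by
      rw [abs_of_nonneg (by nlinarith)]
      have : u^2 = x^2/m := by rw [eq_div_iff hm0.ne']; linear_combination hu2
      nlinarith [this ▸ le_refl (u^2)]
    have e3 : |x^2/16 - m * s^2| ≤ x^4 / (512 * m) := by
      have hst : |s - t| ≤ t^3/4 := by
        rw [abs_sub_comm, abs_of_nonneg (by linarith)]; linarith
      have hsum : s + t ≤ 2*t := by linarith
      have h4 : |s^2 - t^2| ≤ t^4/2 := by
        have : s^2 - t^2 = (s - t) * (s + t) := by ring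
        rw [this, abs_mul]
        have h5 : |s + t| ≤ 2*t := by rw [abs_of_pos (by linarith)]; linarith
        calc |s - t| * |s + t| ≤ (t^3/4) * (2*t) := by
              apply mul_le_mul hst h5 (abs_nonneg _) (by positivity)
          _ = t^4/2 := by ring
      have hmt2 : m * t^2 = x^2/16 := by
        rw [htdef]
        have : m * (u/4)^2 = u^2 * m/16 := by ring
        rw [this, hu2]
      have hmt4 : m * t^4 = x^4/(256*m) := by
        have : m * t^4 = (m*t^2)^2 / m := by field_simp
        rw [this, hmt2]; field_simp; ring
      have he : x^2/16 - m*s^2 = m*(t^2 - s^2) := by rw [mul_sub, hmt2]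
      calc |x^2/16 - m*s^2| = m * |t^2 - s^2| := by
            rw [he, abs_mul, abs_of_pos hm0]
        _ ≤ m * (t^4/2) := by
            rw [abs_sub_comm]; exact mul_le_mul_of_nonneg_left h4 hm0.le
        _ = x^4/(512*m) := by rw [show m * (t^4/2) = (m*t^4)/2 by ring, hmt4]; ring
    have split : c * D2 - D1 = (c - 1) * D2 + (x^2/16 - m*s^2) + (1 - c^2) := by
      rw [hD1, hD2]; ring
    calc |c * D2 - D1| ≤ |c-1| * |D2| + |x^2/16 - m*s^2| + |1 - c^2| := by
          rw [split]
          refine le_trans (abs_add_le _ _) ?_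
          gcongr
          exact le_trans (abs_add_le _ _) (by rw [abs_mul])
      _ ≤ x^2/(2*m) * ((x^2+16)/16) + x^4/(512*m) + x^2/m := by
          rw [abs_of_pos hD2p, hD2eq]
          gcongr
      _ ≤ 2 * (x^2+16)^2 / m := by
          have e : x^2/(2*m) * ((x^2+16)/16) + x^4/(512*m) + x^2/m
              = (x^2*(x^2+16)/32 + x^4/512 + x^2)/m := by field_simp; ring
          rw [e]
          gcongr
          exact poly_bd x
  have key : c / D1 - 1 / D2 = (c * D2 - D1) / (D1 * D2) := by
    field_simp
  rw [key, abs_div, abs_of_pos (mul_pos hD1p hD2p)]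
  calc |c * D2 - D1| / (D1 * D2) ≤ (2 * (x^2+16)^2 / m) / ((x^2+16)^2 / 1024) := by
        apply div_le_div₀ (by positivity) hnum (by positivity)
        rw [hD2eq]
        calc (x^2+16)^2/1024 = ((x^2+16)/64) * ((x^2+16)/16) := by ring
          _ ≤ D1 * ((x^2+16)/16) := by gcongr
    _ = 2048 / m := by field_simp; ring

end IntegralTwoPiAux

open IntegralTwoPiAux

/-- quantitative estimate `|∫_{n^(-1/6)}^{n^(1/6)} cos(x/√n) /
(n sin²(x/(4√n)) + cos²(x/√n)) dx - 2π| ≤ C n^(-1/6)` for all large `n`. -/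
theorem integral_two_pi_rate :
    ∃ C > 0, ∃ N : ℕ, ∀ n ≥ N,
      |(∫ x in ((n : ℝ) ^ (-(1 : ℝ) / 6))..((n : ℝ) ^ ((1 : ℝ) / 6)),
          Real.cos (x / Real.sqrt n) /
            ((n : ℝ) * Real.sin (x / (4 * Real.sqrt n)) ^ 2 +
              Real.cos (x / Real.sqrt n) ^ 2)) - 2 * π|
        ≤ C * (n : ℝ) ^ (-(1 : ℝ) / 6) := by
  refine ⟨3000, by norm_num, 4096, fun n hn => ?_⟩
  have hnR : (4096:ℝ) ≤ (n:ℝ) := by exact_mod_cast hn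
  set m := (n:ℝ) with hmdef
  have hm0 : (0:ℝ) < m := by linarith
  have hm1 : (1:ℝ) ≤ m := by linarith
  set a := m ^ (-(1:ℝ)/6) with hadef
  set b := m ^ ((1:ℝ)/6) with hbdef
  have ha0 : 0 < a := Real.rpow_pos_of_pos hm0 _
  have hb0 : 0 < b := Real.rpow_pos_of_pos hm0 _
  have ha1 : a ≤ 1 := by
    rw [hadef, show (1:ℝ) = m ^ (0:ℝ) by rw [Real.rpow_zero]]
    exact Real.rpow_le_rpow_of_exponent_le hm1 (by norm_num)
  have hb1 : 1 ≤ b := by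
    rw [hbdef, show (1:ℝ) = m ^ (0:ℝ) by rw [Real.rpow_zero]]
    exact Real.rpow_le_rpow_of_exponent_le hm1 (by norm_num)
  have hab : a ≤ b := le_trans ha1 hb1
  have hainv : a = b⁻¹ := by
    rw [hadef, hbdef, show (-(1:ℝ)/6) = -((1:ℝ)/6) by norm_num, Real.rpow_neg hm0.le]
  have hsqrt : Real.sqrt m = m ^ ((1:ℝ)/2) := Real.sqrt_eq_rpow m
  have hs0 : 0 < Real.sqrt m := Real.sqrt_pos.2 hm0
  have h163 : (16:ℝ) ≤ m ^ ((1:ℝ)/3) := by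
    have h := Real.rpow_le_rpow (by norm_num : (0:ℝ) ≤ 4096) hnR (by norm_num : (0:ℝ) ≤ 1/3)
    have : (4096:ℝ) ^ ((1:ℝ)/3) = 16 := by
      rw [show (4096:ℝ) = (16:ℝ)^(3:ℕ) by norm_num, ← Real.rpow_natCast (16:ℝ) 3,
        ← Real.rpow_mul (by norm_num : (0:ℝ) ≤ 16)]
      norm_num
    linarith [this ▸ h]
  have hbs : b / Real.sqrt m ≤ 1/16 := by
    have e : b / Real.sqrt m = m ^ ((1:ℝ)/6 - (1:ℝ)/2) := by
      rw [Real.rpow_sub hm0, hsqrt]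
    have e2 : ((1:ℝ)/6 - (1:ℝ)/2) = -((1:ℝ)/3) := by norm_num
    rw [e, e2, Real.rpow_neg hm0.le]
    rw [inv_le_comm₀ (Real.rpow_pos_of_pos hm0 _) (by norm_num)]
    linarith
  -- functions
  set f : ℝ → ℝ := fun x => Real.cos (x / Real.sqrt m) /
      (m * Real.sin (x / (4 * Real.sqrt m)) ^ 2 + Real.cos (x / Real.sqrt m) ^ 2) with hfdef
  set g : ℝ → ℝ := fun x => 1 / (1 + (x/4)^2) with hgdef
  have hgc : Continuous g := by
    apply Continuous.div continuous_const
    · continuity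
    · intro x; positivity
  have hgint : IntervalIntegrable g MeasureTheory.volume a b := hgc.intervalIntegrable a b
  -- pointwise bound on Ioc a b
  have hpt : ∀ x ∈ Set.Ioc a b, |f x - g x| ≤ 2048 / m := by
    intro x hx
    have hx0 : 0 < x := lt_trans ha0 hx.1
    have hxu : x / Real.sqrt m ≤ 1/16 := by
      refine le_trans ?_ hbs
      exact div_le_div_of_nonneg_right hx.2 hs0.le
    exact ptwise rfl hnR hx0 hxu
  -- denominator positivity gives continuity of f on uIcc
  have hfint : IntervalIntegrable f MeasureTheory.volume a b := by
    apply ContinuousOn.intervalIntegrable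
    apply ContinuousOn.div
    · fun_prop
    · fun_prop
    · intro x hx
      rw [Set.uIcc_of_le hab] at hx
      have hx0 : 0 ≤ x := le_trans ha0.le hx.1
      have hxu : x / Real.sqrt m ≤ 1/16 := by
        refine le_trans ?_ hbs
        exact div_le_div_of_nonneg_right hx.2 hs0.le
      have hu0 : 0 ≤ x / Real.sqrt m := by positivity
      have hc : (1:ℝ)/2 ≤ Real.cos (x / Real.sqrt m) := by
        have h1 : 1 - (x / Real.sqrt m) ^ 2 / 2 ≤ Real.cos (x / Real.sqrt m) :=
          Real.one_sub_sq_div_two_le_cos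
        nlinarith
      have : (0:ℝ) < m * Real.sin (x / (4 * Real.sqrt m)) ^ 2
          + Real.cos (x / Real.sqrt m) ^ 2 := by nlinarith [sq_nonneg (Real.sin (x / (4 * Real.sqrt m)))]
      exact ne_of_gt this
  -- integral of g
  have hg : (∫ x in a..b, g x) = 4 * (Real.arctan (b/4) - Real.arctan (a/4)) := by
    have h := intervalIntegral.integral_comp_div (a := a) (b := b) (c := (4:ℝ))
      (fun y => 1/(1+y^2)) (by norm_num)
    simp only [smul_eq_mul, integral_one_div_one_add_sq] at h
    rw [hgdef]
    exact h
  -- bound |∫ g - 2π| ≤ 17 a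
  have harct : Real.arctan (4/b) = π/2 - Real.arctan (b/4) := by
    rw [show (4:ℝ)/b = (b/4)⁻¹ by rw [inv_div]]
    exact Real.arctan_inv_of_pos (by positivity)
  have han1 : Real.arctan (4/b) ≤ 4 * a :=
    le_trans (arctan_le_self' (by positivity)) (le_of_eq (by rw [hainv, div_eq_mul_inv]))
  have han2 : Real.arctan (a/4) ≤ a := by
    have := arctan_le_self' (x := a/4) (by positivity)
    linarith
  have hnn1 : 0 ≤ Real.arctan (4/b) := by
    rw [← Real.arctan_zero]
    exact Real.arctan_strictMono.monotone (by positivity)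
  have hnn2 : 0 ≤ Real.arctan (a/4) := by
    rw [← Real.arctan_zero]
    exact Real.arctan_strictMono.monotone (by positivity)
  have hgest : |(∫ x in a..b, g x) - 2 * π| ≤ 20 * a := by
    have e : (∫ x in a..b, g x) - 2 * π
        = -(4 * Real.arctan (4/b) + 4 * Real.arctan (a/4)) := by
      rw [hg, harct]; ring
    rw [e, abs_neg, abs_of_nonneg (by linarith)]
    linarith
  -- bound |∫ f - ∫ g|
  have hdiff : |(∫ x in a..b, f x) - ∫ x in a..b, g x| ≤ (2048/m) * |b - a| := by
    rw [← intervalIntegral.integral_sub hfint hgint]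
    have := intervalIntegral.norm_integral_le_of_norm_le_const
      (a := a) (b := b) (C := 2048/m) (f := fun x => f x - g x) ?_
    · simpa using this
    · intro x hx
      rw [Set.uIoc_of_le hab] at hx
      simpa using hpt x hx
  have hba : (2048/m) * |b - a| ≤ 2048 * a := by
    have h1 : |b - a| ≤ b := by
      rw [abs_of_nonneg (by linarith)]; linarith
    have h2 : (2048/m) * |b - a| ≤ (2048/m) * b := by
      apply mul_le_mul_of_nonneg_left h1 (by positivity)
    have h3 : (2048/m) * b = 2048 * m ^ ((1:ℝ)/6 - 1) := by
      rw [Real.rpow_sub hm0, Real.rpow_one, hbdef]; ring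
    have h4 : m ^ ((1:ℝ)/6 - 1) ≤ a := by
      rw [hadef, show (-(1:ℝ)/6) = -((1:ℝ)/6) by norm_num]
      exact Real.rpow_le_rpow_of_exponent_le hm1 (by norm_num)
    calc (2048/m) * |b - a| ≤ (2048/m) * b := h2
      _ = 2048 * m ^ ((1:ℝ)/6 - 1) := h3
      _ ≤ 2048 * a := by linarith
  calc |(∫ x in a..b, f x) - 2 * π|
      ≤ |(∫ x in a..b, f x) - ∫ x in a..b, g x| + |(∫ x in a..b, g x) - 2 * π| := by
        have := abs_sub_le (∫ x in a..b, f x) (∫ x in a..b, g x) (2*π)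
        simpa using this
    _ ≤ (2048/m) * |b - a| + 20 * a := add_le_add hdiff hgest
    _ ≤ 2048 * a + 20 * a := by linarith
    _ ≤ 3000 * a := by linarith
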